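/- Let g and h be integers with g ≥ h ≥ 2. There exists a constant C = C(g,h) > 0 such that for every positive integer N and every C_h[g] set A ⊆ [0, N²], writing A_ν = |A ∩ [(ν-1)N, νN]| for ν = 1,…,N, one has Σ_{ν=1}^{N} A_ν^h ≤ C · N^{h-1}. -/

import Mathlib

/-- `A` is a `C_h[g]` set: there do not exist a set `X` of `h` integers and `g` pairwise
distinct integers `k_1, …, k_g` such that `X + k_i ⊆ A` for every `i`. -/
def IsChgSet (h g : ℕ) (A : Set ℤ) : Prop :=
  ¬ ∃ (X : Finset ℤ) (k : Fin g → ℤ), X.card = h ∧ Function.Injective k ∧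
      ∀ i : Fin g, ∀ x ∈ X, x + k i ∈ A



open Finset

-- pointwise power bound
private lemma pow_le_aux (a h : ℕ) : a ^ h ≤ 2 ^ h * a.descFactorial h + (2 * h) ^ h := by
  rcases le_or_gt a (2 * h) with hle | hlt
  · exact le_add_of_le_right (Nat.pow_le_pow_left hle h)
  · refine le_add_of_le_left ?_
    calc a ^ h ≤ (2 * (a + 1 - h)) ^ h := by
          refine Nat.pow_le_pow_left ?_ h
          omega
      _ = 2 ^ h * (a + 1 - h) ^ h := by rw [mul_pow]
      _ ≤ 2 ^ h * a.descFactorial h :=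
          Nat.mul_le_mul_left _ (Nat.pow_sub_le_descFactorial a h)

private lemma count_lemma (g h : ℕ) (hh : 2 ≤ h) (hg : 2 ≤ g) (N : ℕ) (hN : 0 < N)
    (A : Finset ℤ) (hA : IsChgSet h g ↑A) :
    ∑ ν ∈ Finset.Icc 1 N,
      ((A ∩ Finset.Icc (((ν : ℤ) - 1) * N) ((ν : ℤ) * N)).card).choose h
      ≤ (g - 1) * N ^ (h - 1) := by
  classical
  set m : Finset ℤ → ℤ := fun X => WithTop.untopD 0 X.min with hm
  have hmin : ∀ (X : Finset ℤ) (hX : X.Nonempty), m X = X.min' hX := by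
    intro X hX
    simp only [hm, ← Finset.coe_min' hX, WithTop.untopD_coe]
  set B : ℕ → Finset ℤ := fun ν => A ∩ Finset.Icc (((ν : ℤ) - 1) * N) ((ν : ℤ) * N) with hB
  set S : Finset ((_ : ℕ) × Finset ℤ) :=
    (Finset.Icc 1 N).sigma (fun ν => (B ν).powersetCard h) with hS
  have hcard : ∑ ν ∈ Finset.Icc 1 N, ((B ν).card).choose h = S.card := by
    rw [hS, Finset.card_sigma]
    exact Finset.sum_congr rfl fun ν _ => (Finset.card_powersetCard h (B ν)).symm
  rw [hcard]
  -- basic facts about members of S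
  have hmem : ∀ p ∈ S, p.1 ∈ Finset.Icc 1 N ∧ p.2 ⊆ B p.1 ∧ p.2.card = h := by
    intro p hp
    rw [hS, Finset.mem_sigma, Finset.mem_powersetCard] at hp
    exact ⟨hp.1, hp.2.1, hp.2.2⟩
  have hne : ∀ p ∈ S, p.2.Nonempty := by
    intro p hp
    rw [← Finset.card_pos, (hmem p hp).2.2]; omega
  set f : ((_ : ℕ) × Finset ℤ) → Finset ℤ := fun p => p.2.image (fun x => x - m p.2) with hf
  -- reconstruct p.2 from f p and m p.2
  have hrec : ∀ p : ((_ : ℕ) × Finset ℤ), (f p).image (fun y => y + m p.2) = p.2 := by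
    intro p
    rw [hf, Finset.image_image]
    ext x
    simp
  -- each block interval facts
  have hsubI : ∀ p ∈ S, ∀ x ∈ p.2, ((p.1 : ℤ) - 1) * N ≤ x ∧ x ≤ (p.1 : ℤ) * N := by
    intro p hp x hx
    have := (hmem p hp).2.1 hx
    rw [hB, Finset.mem_inter, Finset.mem_Icc] at this
    exact this.2
  have hsubA : ∀ p ∈ S, ∀ x ∈ p.2, x ∈ A := by
    intro p hp x hx
    have := (hmem p hp).2.1 hx
    rw [hB, Finset.mem_inter] at this
    exact this.1
  have hmmem : ∀ p ∈ S, m p.2 ∈ p.2 := by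
    intro p hp
    rw [hmin p.2 (hne p hp)]
    exact Finset.min'_mem _ _
  have hmle : ∀ p ∈ S, ∀ x ∈ p.2, m p.2 ≤ x := by
    intro p hp x hx
    rw [hmin p.2 (hne p hp)]
    exact Finset.min'_le _ _ hx
  -- shape facts
  have hshape : ∀ p ∈ S, (f p).card = h ∧ (0 : ℤ) ∈ f p ∧ f p ⊆ Finset.Icc (0 : ℤ) N := by
    intro p hp
    refine ⟨?_, ?_, ?_⟩
    · rw [hf]
      rw [Finset.card_image_of_injective _ (sub_left_injective)]
      exact (hmem p hp).2.2
    · rw [hf, Finset.mem_image]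
      exact ⟨m p.2, hmmem p hp, by ring⟩
    · intro y hy
      rw [hf, Finset.mem_image] at hy
      obtain ⟨x, hx, rfl⟩ := hy
      rw [Finset.mem_Icc]
      constructor
      · have := hmle p hp x hx; omega
      · have h1 := (hsubI p hp x hx).2
        have h2 := (hsubI p hp (m p.2) (hmmem p hp)).1
        have h3 : ((p.1:ℤ)-1) * N = p.1 * N - N := by ring
        omega
  -- distinct blocks share at most one point, so p.2 determines p.1
  have hdet : ∀ p ∈ S, ∀ q ∈ S, p.2 = q.2 → p = q := by
    intro p hp q hq h22
    have hcard2 : 1 < p.2.card := by rw [(hmem p hp).2.2]; omega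
    obtain ⟨a, ha, b, hb, hab⟩ := Finset.one_lt_card.1 hcard2
    by_contra hpq
    have h11 : p.1 ≠ q.1 := by
      intro h1; exact hpq (Sigma.ext h1 (heq_of_eq h22))
    -- wlog p.1 < q.1
    rcases lt_or_gt_of_ne h11 with hlt | hlt
    · have hap := (hsubI p hp a ha).2
      have haq := (hsubI q hq a (h22 ▸ ha)).1
      have hbp := (hsubI p hp b hb).2
      have hbq := (hsubI q hq b (h22 ▸ hb)).1
      have h1 : (p.1 : ℤ) ≤ (q.1 : ℤ) - 1 := by omega
      have key : (p.1 : ℤ) * N ≤ ((q.1:ℤ) - 1) * N :=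
        mul_le_mul_of_nonneg_right h1 (by positivity)
      omega
    · have hap := (hsubI q hq a (h22 ▸ ha)).2
      have haq := (hsubI p hp a ha).1
      have hbp := (hsubI q hq b (h22 ▸ hb)).2
      have hbq := (hsubI p hp b hb).1
      have h1 : (q.1 : ℤ) ≤ (p.1 : ℤ) - 1 := by omega
      have key : (q.1 : ℤ) * N ≤ ((p.1:ℤ) - 1) * N :=
        mul_le_mul_of_nonneg_right h1 (by positivity)
      omega
  -- fiber bound
  have hfiber : ∀ Y ∈ S.image f, (S.filter (fun p => f p = Y)).card ≤ g - 1 := by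
    intro Y hY
    by_contra hcon
    push_neg at hcon
    have hgle : g ≤ (S.filter (fun p => f p = Y)).card := by omega
    set T := S.filter (fun p => f p = Y) with hT
    -- mins are injective on T
    have hinjT : Set.InjOn (fun p : (_ : ℕ) × Finset ℤ => m p.2) T := by
      intro p hp q hq hmpq
      rw [Finset.mem_coe, hT, Finset.mem_filter] at hp hq
      have hm2 : m p.2 = m q.2 := hmpq
      have h22 : p.2 = q.2 := by
        rw [← hrec p, ← hrec q, hp.2, hq.2, hm2]
      exact hdet p hp.1 q hq.1 h22
    have hKcard : g ≤ (T.image (fun p => m p.2)).card := by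
      rwa [Finset.card_image_of_injOn hinjT]
    obtain ⟨K', hK'sub, hK'card⟩ := Finset.exists_subset_card_eq hKcard
    -- build k : Fin g → ℤ
    have e : K' ≃ Fin g := (K'.equivFin).trans (finCongr hK'card)
    set k : Fin g → ℤ := fun i => (e.symm i : ℤ) with hk
    have hkinj : Function.Injective k := by
      intro i j hij
      have : (e.symm i : K') = e.symm j := Subtype.ext hij
      simpa using e.symm.injective this
    have hkmem : ∀ i, k i ∈ T.image (fun p => m p.2) := fun i => hK'sub (e.symm i).2
    -- Y has the right properties
    obtain ⟨p₀, hp₀S, hp₀Y⟩ := Finset.mem_image.1 hY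
    have hYcard : Y.card = h := hp₀Y ▸ (hshape p₀ hp₀S).1
    apply hA
    refine ⟨Y, k, hYcard, hkinj, ?_⟩
    intro i y hy
    obtain ⟨q, hqT, hqm⟩ := Finset.mem_image.1 (hkmem i)
    rw [hT, Finset.mem_filter] at hqT
    have : y ∈ f q := hqT.2 ▸ hy
    rw [hf, Finset.mem_image] at this
    obtain ⟨x, hx, rfl⟩ := this
    have : x - m q.2 + k i = x := by rw [← hqm]; ring
    rw [this]
    exact hsubA q hqT.1 x hx
  -- image bound
  have himage : (S.image f).card ≤ N ^ (h - 1) := by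
    have hinj2 : Set.InjOn (fun Y => Finset.erase Y (0:ℤ)) (S.image f) := by
      intro Y hY Z hZ hYZ
      rw [Finset.mem_coe] at hY hZ
      obtain ⟨p, hp, rfl⟩ := Finset.mem_image.1 hY
      obtain ⟨q, hq, rfl⟩ := Finset.mem_image.1 hZ
      have h0Y := (hshape p hp).2.1
      have h0Z := (hshape q hq).2.1
      have hYZ' : (f p).erase 0 = (f q).erase 0 := hYZ
      rw [← Finset.insert_erase h0Y, ← Finset.insert_erase h0Z, hYZ']
    have hmaps : ∀ Y ∈ S.image f,
        Finset.erase Y 0 ∈ (Finset.Icc (1:ℤ) N).powersetCard (h-1) := by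
      intro Y hY
      obtain ⟨p, hp, rfl⟩ := Finset.mem_image.1 hY
      rw [Finset.mem_powersetCard]
      constructor
      · intro y hy
        have hy' := Finset.mem_of_mem_erase hy
        have := Finset.mem_Icc.1 ((hshape p hp).2.2 hy')
        have hy0 := Finset.ne_of_mem_erase hy
        rw [Finset.mem_Icc]; omega
      · rw [Finset.card_erase_of_mem (hshape p hp).2.1, (hshape p hp).1]
    calc (S.image f).card ≤ ((Finset.Icc (1:ℤ) N).powersetCard (h-1)).card :=
          Finset.card_le_card_of_injOn _ hmaps hinj2
      _ = N.choose (h-1) := by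
          rw [Finset.card_powersetCard]
          congr 1
          rw [Int.card_Icc]
          simp
      _ ≤ N ^ (h-1) := Nat.choose_le_pow _ _
  calc S.card ≤ (g - 1) * (S.image f).card := Finset.card_le_mul_card_image S (g-1) hfiber
    _ ≤ (g - 1) * N ^ (h - 1) := Nat.mul_le_mul_left _ himage

theorem stmt13 (g h : ℕ) (hgh : h ≤ g) (hh : 2 ≤ h) :
    ∃ C : ℝ, 0 < C ∧ ∀ N : ℕ, 0 < N → ∀ A : Finset ℤ,
      ↑A ⊆ Set.Icc (0 : ℤ) ((N : ℤ) ^ 2) → IsChgSet h g ↑A →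
      ∑ ν ∈ Finset.Icc 1 N,
          ((A ∩ Finset.Icc (((ν : ℤ) - 1) * N) ((ν : ℤ) * N)).card : ℝ) ^ h ≤
        C * (N : ℝ) ^ (h - 1) := by
  classical
  set K : ℕ := 2 ^ h * h.factorial * g + (2 * h) ^ h with hK
  have hKpos : 0 < K := by
    have := pow_pos (show 0 < 2 * h by omega) h
    omega
  refine ⟨(K : ℝ), by exact_mod_cast hKpos, ?_⟩
  intro N hN A _ hA
  have hg : 2 ≤ g := le_trans hh hgh
  have h1 := count_lemma g h hh hg N hN A hA
  have h2 : N ≤ N ^ (h - 1) := Nat.le_self_pow (by omega) N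
  have key : ∑ ν ∈ Finset.Icc 1 N,
      (A ∩ Finset.Icc (((ν : ℤ) - 1) * N) ((ν : ℤ) * N)).card ^ h ≤ K * N ^ (h - 1) := by
    calc ∑ ν ∈ Finset.Icc 1 N,
        (A ∩ Finset.Icc (((ν : ℤ) - 1) * N) ((ν : ℤ) * N)).card ^ h
        ≤ ∑ ν ∈ Finset.Icc 1 N,
          ((2 ^ h * h.factorial) *
            ((A ∩ Finset.Icc (((ν : ℤ) - 1) * N) ((ν : ℤ) * N)).card.choose h) + (2 * h) ^ h) := by
          refine Finset.sum_le_sum fun ν _ => ?_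
          have := pow_le_aux ((A ∩ Finset.Icc (((ν : ℤ) - 1) * N) ((ν : ℤ) * N)).card) h
          rwa [Nat.descFactorial_eq_factorial_mul_choose, ← mul_assoc] at this
      _ = (2 ^ h * h.factorial) *
            (∑ ν ∈ Finset.Icc 1 N,
              ((A ∩ Finset.Icc (((ν : ℤ) - 1) * N) ((ν : ℤ) * N)).card.choose h))
            + N * (2 * h) ^ h := by
          rw [Finset.sum_add_distrib, ← Finset.mul_sum, Finset.sum_const, smul_eq_mul,
            Nat.card_Icc]
          simp
      _ ≤ (2 ^ h * h.factorial) * ((g - 1) * N ^ (h - 1)) + N ^ (h - 1) * (2 * h) ^ h :=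
          Nat.add_le_add (Nat.mul_le_mul_left _ h1) (Nat.mul_le_mul_right _ h2)
      _ = (2 ^ h * h.factorial * (g - 1) + (2 * h) ^ h) * N ^ (h - 1) := by ring
      _ ≤ K * N ^ (h - 1) := by
          refine Nat.mul_le_mul_right _ ?_
          rw [hK]
          exact Nat.add_le_add_right (Nat.mul_le_mul_left _ (Nat.sub_le g 1)) _
  calc ∑ ν ∈ Finset.Icc 1 N,
      ((A ∩ Finset.Icc (((ν : ℤ) - 1) * N) ((ν : ℤ) * N)).card : ℝ) ^ h
      = ((∑ ν ∈ Finset.Icc 1 N,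
          (A ∩ Finset.Icc (((ν : ℤ) - 1) * N) ((ν : ℤ) * N)).card ^ h : ℕ) : ℝ) := by
        push_cast; rfl
    _ ≤ ((K * N ^ (h - 1) : ℕ) : ℝ) := Nat.cast_le.2 key
    _ = (K : ℝ) * (N : ℝ) ^ (h - 1) := by push_cast; rfl
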